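/- Let P and Q be probability measures on a measurable space X with P ≪ Q and Radon–Nikodym derivative w* = dP/dQ satisfying 0 ≤ w*(x) ≤ M_3 for all x. Let φ_1,…,φ_L : X → ℝ be measurable with |φ_ℓ(x)|² ≤ M_2 for all ℓ ≤ L and all x, and ∫ φ_ℓ dP = 0 for all ℓ ≤ L; set k_L(x,y) = ∑_{ℓ=1}^L φ_ℓ(x)φ_ℓ(y). Let n be even, x_1,…,x_n i.i.d. with law Q, and for i ∈ D_0 = {1,…,n/2} define the control-variate weight w_i = (1/n) w*(x_i) − (2/n²) ∑_{j∈D_1} w*(x_i) w*(x_j) k_L(x_j, x_i), where D_1 = {n/2+1,…,n} (and symmetrically for i ∈ D_1). Then for every i ≤ n, ℙ( w_i < 0 ) ≤ exp( − n / (4 L² M_2² M_3²) ). -/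

import Mathlib

open MeasureTheory Function
open scoped ENNReal NNReal

lemma aux_mgf_le {X : Type*} [MeasurableSpace X] (Q : Measure X) [IsProbabilityMeasure Q]
    (Y : X → ℝ) (hY : Measurable Y) (c t : ℝ) (hc : 0 < c) (ht : 0 < t)
    (hbd : ∀ y, |Y y| ≤ c) (hmean : ∫ y, Y y ∂Q = 0) :
    ∫⁻ y, ENNReal.ofReal (Real.exp (t * Y y)) ∂Q
      ≤ ENNReal.ofReal (Real.exp (t ^ 2 * c ^ 2 / 2)) := by
  set h : X → ℝ := fun y => Real.cosh (t * c) + (Y y / c) * Real.sinh (t * c) with hh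
  have hpt : ∀ y, Real.exp (t * Y y) ≤ h y := by
    intro y
    obtain ⟨h1, h2⟩ := abs_le.1 (hbd y)
    have ha : (0:ℝ) ≤ (c - Y y) / (2 * c) := by
      apply div_nonneg <;> linarith
    have hb : (0:ℝ) ≤ (c + Y y) / (2 * c) := by
      apply div_nonneg <;> linarith
    have hab : (c - Y y) / (2 * c) + (c + Y y) / (2 * c) = 1 := by
      field_simp; ring
    have hcx := convexOn_exp.2 (Set.mem_univ (-(t*c))) (Set.mem_univ (t*c)) ha hb hab
    simp only [smul_eq_mul] at hcx
    have harg : (c - Y y) / (2 * c) * (-(t*c)) + (c + Y y) / (2 * c) * (t*c) = t * Y y := by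
      field_simp
      ring
    rw [harg] at hcx
    refine hcx.trans (le_of_eq ?_)
    rw [hh]
    simp only [smul_eq_mul, Real.cosh_eq, Real.sinh_eq]
    field_simp
    ring
  have hnn : ∀ y, 0 ≤ h y := fun y => (Real.exp_pos _).le.trans (hpt y)
  have hYint : Integrable Y Q :=
    (integrable_const c).mono' hY.aestronglyMeasurable (ae_of_all _ fun y => by
      simpa using hbd y)
  have hint : Integrable h Q := by
    apply Integrable.add (integrable_const _)
    exact (hYint.div_const c).mul_const _
  have hI : ∫ y, h y ∂Q = Real.cosh (t * c) := by
    rw [hh]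
    rw [integral_add (integrable_const _) ((hYint.div_const c).mul_const _)]
    simp [integral_mul_const, integral_div, hmean]
  calc ∫⁻ y, ENNReal.ofReal (Real.exp (t * Y y)) ∂Q
      ≤ ∫⁻ y, ENNReal.ofReal (h y) ∂Q :=
        lintegral_mono fun y => ENNReal.ofReal_le_ofReal (hpt y)
    _ = ENNReal.ofReal (∫ y, h y ∂Q) :=
        (ofReal_integral_eq_lintegral_ofReal hint (ae_of_all _ hnn)).symm
    _ ≤ ENNReal.ofReal (Real.exp (t ^ 2 * c ^ 2 / 2)) := by
        rw [hI]
        apply ENNReal.ofReal_le_ofReal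
        refine (Real.cosh_le_exp_half_sq _).trans (le_of_eq ?_)
        ring_nf
open scoped ENNReal NNReal

lemma aux_prod_meas {X : Type*} [MeasurableSpace X] {n : ℕ} {g : X → X → ℝ≥0∞}
    (hg : Measurable (Function.uncurry g)) (i : Fin n) (s : Finset (Fin n)) :
    Measurable fun ω : Fin n → X => ∏ j ∈ s, g (ω j) (ω i) := by
  refine Finset.measurable_prod _ fun k _ => ?_
  exact Measurable.comp (f := fun ω : Fin n → X => (ω k, ω i)) hg
    ((measurable_pi_apply k).prodMk (measurable_pi_apply i))

lemma aux_lmarginal_prod_le {X : Type*} [MeasurableSpace X] (Q : Measure X)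
    [IsProbabilityMeasure Q] {n : ℕ} (g : X → X → ℝ≥0∞)
    (hg : Measurable (Function.uncurry g)) (C : ℝ≥0∞)
    (hC : ∀ x, ∫⁻ y, g y x ∂Q ≤ C) (i : Fin n) (s : Finset (Fin n)) (hi : i ∉ s)
    (x : Fin n → X) :
    (∫⋯∫⁻_s, (fun ω => ∏ j ∈ s, g (ω j) (ω i)) ∂(fun _ => Q)) x ≤ C ^ s.card := by
  classical
  induction s using Finset.cons_induction generalizing x with
  | empty => simp
  | cons j s hj ih =>
    have hij : i ≠ j := fun h => hi (h ▸ Finset.mem_cons_self j s)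
    have his : i ∉ s := fun h => hi (Finset.mem_cons_of_mem h)
    rw [Finset.cons_eq_insert] at *
    have hF : Measurable fun ω : Fin n → X => ∏ k ∈ insert j s, g (ω k) (ω i) :=
      aux_prod_meas hg i _
    rw [lmarginal_insert _ hF hj x]
    have key : ∀ y : Fin n → X,
        (∫⋯∫⁻_s, (fun ω => ∏ k ∈ insert j s, g (ω k) (ω i)) ∂(fun _ => Q)) y
          = g (y j) (y i) * (∫⋯∫⁻_s, (fun ω => ∏ k ∈ s, g (ω k) (ω i)) ∂(fun _ => Q)) y := by
      intro y
      simp only [lmarginal, Finset.prod_insert hj]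
      have e1 : ∀ z, updateFinset y s z j = y j := fun z => by simp [updateFinset, hj]
      have e2 : ∀ z, updateFinset y s z i = y i := fun z => by simp [updateFinset, his]
      simp_rw [e1, e2]
      refine lintegral_const_mul _ ?_
      refine Finset.measurable_prod _ fun k _ => ?_
      have h1 : Measurable fun z : { x // x ∈ s } → X => updateFinset y s z k :=
        Measurable.comp (g := fun f : Fin n → X => f k) (f := fun z => updateFinset y s z)
          (measurable_pi_apply k) measurable_updateFinset
      exact Measurable.comp
        (f := fun z : { x // x ∈ s } → X => (updateFinset y s z k, y i)) hg
        (h1.prodMk measurable_const)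
    calc ∫⁻ xj, (∫⋯∫⁻_s, (fun ω => ∏ k ∈ insert j s, g (ω k) (ω i)) ∂(fun _ => Q))
            (Function.update x j xj) ∂Q
        ≤ ∫⁻ xj, g xj (x i) * C ^ s.card ∂Q := by
          apply lintegral_mono
          intro xj
          dsimp only
          rw [key, Function.update_self, Function.update_of_ne hij]
          exact mul_le_mul_right (ih his _) _
      _ = (∫⁻ xj, g xj (x i) ∂Q) * C ^ s.card := by
          refine lintegral_mul_const _ ?_
          exact Measurable.comp (f := fun a : X => (a, x i)) hg
            (measurable_id.prodMk measurable_const)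
      _ ≤ C * C ^ s.card := mul_le_mul_left (hC _) _
      _ = C ^ (insert j s).card := by
          rw [Finset.card_insert_of_notMem hj, pow_succ, mul_comm]

lemma aux_lintegral_prod_le {X : Type*} [MeasurableSpace X] (Q : Measure X)
    [IsProbabilityMeasure Q] {n : ℕ} (g : X → X → ℝ≥0∞)
    (hg : Measurable (Function.uncurry g)) (C : ℝ≥0∞)
    (hC : ∀ x, ∫⁻ y, g y x ∂Q ≤ C) (i : Fin n) (s : Finset (Fin n)) (hi : i ∉ s) :
    ∫⁻ ω, ∏ j ∈ s, g (ω j) (ω i) ∂(Measure.pi fun _ : Fin n => Q) ≤ C ^ s.card := by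
  classical
  have hne : Nonempty X := by
    by_contra h
    rw [not_nonempty_iff] at h
    have := measure_univ (μ := Q)
    simp [Set.univ_eq_empty_iff.2 h] at this
  set x₀ : Fin n → X := fun _ => Classical.arbitrary X with hx₀
  rw [lintegral_eq_lmarginal_univ (μ := fun _ => Q)
    (f := fun ω => ∏ j ∈ s, g (ω j) (ω i)) x₀]
  rw [← Finset.sdiff_union_of_subset (Finset.subset_univ s),
    lmarginal_union _ _ (aux_prod_meas hg i s) Finset.sdiff_disjoint]
  calc (∫⋯∫⁻_Finset.univ \ s, (∫⋯∫⁻_s, (fun ω => ∏ j ∈ s, g (ω j) (ω i)) ∂fun _ => Q)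
        ∂fun _ => Q) x₀
      ≤ (∫⋯∫⁻_Finset.univ \ s, (fun _ => C ^ s.card) ∂fun _ => Q) x₀ :=
        lmarginal_mono (fun y => aux_lmarginal_prod_le Q g hg C hC i s hi y) x₀
    _ = C ^ s.card := by
        simp [lmarginal, lintegral_const]

lemma aux_main {X : Type*} [MeasurableSpace X] (Q : Measure X) [IsProbabilityMeasure Q]
    (w : X → ℝ) (hw : Measurable w) (M3 : ℝ) (hwnn : ∀ x, 0 ≤ w x) (hwbd : ∀ x, w x ≤ M3)
    (L : ℕ) (φ : Fin L → X → ℝ) (hφm : ∀ ℓ, Measurable (φ ℓ)) (M2 : ℝ)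
    (hφbd : ∀ ℓ x, |φ ℓ x| ^ 2 ≤ M2)
    (hmean : ∀ ℓ, ∫ y, w y * φ ℓ y ∂Q = 0)
    (kL : X → X → ℝ) (hkL : ∀ a b, kL a b = ∑ ℓ, φ ℓ a * φ ℓ b)
    (m : ℕ) (hm : 0 < m) (i : Fin (2 * m)) (s : Finset (Fin (2 * m)))
    (his : i ∉ s) (hcard : s.card = m)
    (hL : 0 < L) (hM2 : 0 < M2) (hM3 : 0 < M3) :
    (Measure.pi fun _ : Fin (2 * m) => Q)
      {ω | (1 / (2 * m : ℝ)) * w (ω i)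
          - (2 / (2 * m : ℝ) ^ 2) * ∑ j ∈ s, w (ω i) * w (ω j) * kL (ω j) (ω i) < 0}
      ≤ ENNReal.ofReal (Real.exp (-(2 * m : ℝ) / (4 * (L : ℝ) ^ 2 * M2 ^ 2 * M3 ^ 2))) := by
  classical
  set c : ℝ := L * M2 * M3 with hcdef
  have hc : 0 < c := by positivity
  set t : ℝ := 1 / c ^ 2 with htdef
  have ht : 0 < t := by positivity
  set f : X → X → ℝ := fun y x => w y * kL y x with hfdef
  -- measurability
  have hkLm : Measurable fun p : X × X => kL p.1 p.2 := by
    have : (fun p : X × X => kL p.1 p.2) = fun p : X × X => ∑ ℓ, φ ℓ p.1 * φ ℓ p.2 :=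
      funext fun p => hkL _ _
    rw [this]
    exact Finset.measurable_sum _ fun ℓ _ =>
      ((hφm ℓ).comp measurable_fst).mul ((hφm ℓ).comp measurable_snd)
  have hfm : Measurable (Function.uncurry f) := (hw.comp measurable_fst).mul hkLm
  -- bound
  have hprod : ∀ (ℓ : Fin L) (a b : X), |φ ℓ a * φ ℓ b| ≤ M2 := by
    intro ℓ a b
    rw [abs_mul]
    nlinarith [hφbd ℓ a, hφbd ℓ b, abs_nonneg (φ ℓ a), abs_nonneg (φ ℓ b),
      sq_nonneg (|φ ℓ a| - |φ ℓ b|)]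
  have hkbd : ∀ y x, |kL y x| ≤ L * M2 := by
    intro y x
    rw [hkL]
    calc |∑ ℓ, φ ℓ y * φ ℓ x| ≤ ∑ ℓ, |φ ℓ y * φ ℓ x| := Finset.abs_sum_le_sum_abs _ _
      _ ≤ ∑ _ℓ : Fin L, M2 := Finset.sum_le_sum fun ℓ _ => hprod ℓ y x
      _ = L * M2 := by simp [Finset.sum_const, mul_comm]
  have hfbd : ∀ y x, |f y x| ≤ c := by
    intro y x
    rw [hfdef]
    simp only
    rw [abs_mul, abs_of_nonneg (hwnn y)]
    calc w y * |kL y x| ≤ M3 * (L * M2) :=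
          mul_le_mul (hwbd y) (hkbd y x) (abs_nonneg _) (by positivity)
      _ = c := by rw [hcdef]; ring
  -- mean zero
  have habs : ∀ (ℓ : Fin L) (y : X), |φ ℓ y| ≤ Real.sqrt M2 := by
    intro ℓ y
    rw [← Real.sqrt_sq_eq_abs]
    exact Real.sqrt_le_sqrt (by simpa [sq_abs] using hφbd ℓ y)
  have hfmean : ∀ x, ∫ y, f y x ∂Q = 0 := by
    intro x
    have hrw : ∀ y, f y x = ∑ ℓ, w y * φ ℓ y * φ ℓ x := by
      intro y
      rw [hfdef]
      simp only
      rw [hkL, Finset.mul_sum]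
      exact Finset.sum_congr rfl fun ℓ _ => by ring
    simp_rw [hrw]
    have hint : ∀ ℓ : Fin L, Integrable (fun y => w y * φ ℓ y * φ ℓ x) Q := by
      intro ℓ
      refine (integrable_const (M3 * Real.sqrt M2 * |φ ℓ x|)).mono'
        (((hw.mul (hφm ℓ)).mul_const _).aestronglyMeasurable) (ae_of_all _ fun y => ?_)
      have h1 : |w y * φ ℓ y * φ ℓ x| = w y * |φ ℓ y| * |φ ℓ x| := by
        rw [abs_mul, abs_mul, abs_of_nonneg (hwnn y)]
      rw [Real.norm_eq_abs, h1]
      have := habs ℓ y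
      have hs2 : (0:ℝ) ≤ Real.sqrt M2 := Real.sqrt_nonneg _
      have : w y * |φ ℓ y| ≤ M3 * Real.sqrt M2 :=
        mul_le_mul (hwbd y) (habs ℓ y) (abs_nonneg _) (le_trans (hwnn y) (hwbd y))
      exact mul_le_mul_of_nonneg_right this (abs_nonneg _)
    rw [integral_finset_sum _ fun ℓ _ => hint ℓ]
    refine Finset.sum_eq_zero fun ℓ _ => ?_
    rw [integral_mul_const, hmean ℓ, zero_mul]
  -- events
  set μ := Measure.pi fun _ : Fin (2 * m) => Q with hμ
  set S : (Fin (2 * m) → X) → ℝ := fun ω => ∑ j ∈ s, f (ω j) (ω i) with hSdef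
  have hSm : Measurable S := by
    refine Finset.measurable_sum _ fun j _ => ?_
    exact Measurable.comp (f := fun ω : Fin (2 * m) → X => (ω j, ω i)) hfm
      ((measurable_pi_apply j).prodMk (measurable_pi_apply i))
  have hsub : {ω : Fin (2 * m) → X | (1 / (2 * m : ℝ)) * w (ω i)
      - (2 / (2 * m : ℝ) ^ 2) * ∑ j ∈ s, w (ω i) * w (ω j) * kL (ω j) (ω i) < 0}
      ⊆ {ω | (m : ℝ) < S ω} := by
    intro ω hω
    simp only [Set.mem_setOf_eq] at hω ⊢
    by_contra hS
    push_neg at hS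
    have hsum : ∑ j ∈ s, w (ω i) * w (ω j) * kL (ω j) (ω i) = w (ω i) * S ω := by
      rw [hSdef]
      simp only
      rw [Finset.mul_sum]
      exact Finset.sum_congr rfl fun j _ => by rw [hfdef]; ring
    rw [hsum] at hω
    have hN : (0:ℝ) < 2 * m := by positivity
    have hwi := hwnn (ω i)
    have h1 : (2 / (2 * m : ℝ) ^ 2) * (w (ω i) * S ω)
        ≤ (2 / (2 * m : ℝ) ^ 2) * (w (ω i) * m) := by
      apply mul_le_mul_of_nonneg_left (mul_le_mul_of_nonneg_left hS hwi) (by positivity)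
    have h2 : (2 / (2 * m : ℝ) ^ 2) * (w (ω i) * m) = (1 / (2 * m : ℝ)) * w (ω i) := by
      field_simp
    linarith
  set g : X → X → ℝ≥0∞ := fun y x => ENNReal.ofReal (Real.exp (t * f y x)) with hgdef
  have hgm : Measurable (Function.uncurry g) :=
    ((measurable_const.mul hfm).exp).ennreal_ofReal
  have hC : ∀ x, ∫⁻ y, g y x ∂Q ≤ ENNReal.ofReal (Real.exp (t ^ 2 * c ^ 2 / 2)) := by
    intro x
    refine aux_mgf_le Q (fun y => f y x) ?_ c t hc ht (fun y => hfbd y x) (hfmean x)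
    exact Measurable.comp (f := fun y : X => (y, x)) hfm
      (measurable_id.prodMk measurable_const)
  -- Chernoff
  have hmeasB : MeasurableSet {ω : Fin (2 * m) → X | (m : ℝ) < S ω} :=
    measurableSet_lt measurable_const hSm
  have hchain : μ {ω | (m : ℝ) < S ω}
      ≤ ∫⁻ ω, ENNReal.ofReal (Real.exp (-(t * m))) * ∏ j ∈ s, g (ω j) (ω i) ∂μ := by
    have hfac : ∀ ω : Fin (2 * m) → X, ENNReal.ofReal (Real.exp (t * (S ω - m)))
        = ENNReal.ofReal (Real.exp (-(t * m))) * ∏ j ∈ s, g (ω j) (ω i) := by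
      intro ω
      rw [hgdef]
      simp only
      rw [← ENNReal.ofReal_prod_of_nonneg (fun j _ => (Real.exp_pos _).le),
        ← ENNReal.ofReal_mul (Real.exp_pos _).le, ← Real.exp_sum, ← Real.exp_add]
      congr 1
      simp only [hSdef, hfdef]
      rw [mul_sub, Finset.mul_sum, sub_eq_neg_add]
    calc μ {ω | (m : ℝ) < S ω} = ∫⁻ ω in {ω | (m : ℝ) < S ω}, 1 ∂μ :=
          (setLIntegral_one _).symm
      _ ≤ ∫⁻ ω in {ω | (m : ℝ) < S ω}, ENNReal.ofReal (Real.exp (t * (S ω - m))) ∂μ := by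
          refine setLIntegral_mono ((((hSm.sub measurable_const).const_mul t).exp).ennreal_ofReal)
            fun ω hω => ?_
          rw [ENNReal.one_le_ofReal]
          exact Real.one_le_exp (mul_nonneg ht.le (by simp only [Set.mem_setOf_eq] at hω; linarith))
      _ ≤ ∫⁻ ω, ENNReal.ofReal (Real.exp (t * (S ω - m))) ∂μ :=
          setLIntegral_le_lintegral _ _
      _ = ∫⁻ ω, ENNReal.ofReal (Real.exp (-(t * m))) * ∏ j ∈ s, g (ω j) (ω i) ∂μ :=
          lintegral_congr hfac
  have hfinal : ∫⁻ ω, ENNReal.ofReal (Real.exp (-(t * m))) * ∏ j ∈ s, g (ω j) (ω i) ∂μ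
      ≤ ENNReal.ofReal (Real.exp (-(2 * m : ℝ) / (4 * (L : ℝ) ^ 2 * M2 ^ 2 * M3 ^ 2))) := by
    rw [lintegral_const_mul _ (aux_prod_meas hgm i s)]
    calc ENNReal.ofReal (Real.exp (-(t * m))) * ∫⁻ ω, ∏ j ∈ s, g (ω j) (ω i) ∂μ
        ≤ ENNReal.ofReal (Real.exp (-(t * m)))
            * ENNReal.ofReal (Real.exp (t ^ 2 * c ^ 2 / 2)) ^ s.card :=
          mul_le_mul_right (aux_lintegral_prod_le Q g hgm _ hC i s his) _
      _ = ENNReal.ofReal (Real.exp (-(t * m)) * Real.exp (t ^ 2 * c ^ 2 / 2) ^ m) := by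
          rw [hcard, ← ENNReal.ofReal_pow (Real.exp_pos _).le,
            ← ENNReal.ofReal_mul (Real.exp_pos _).le]
      _ = ENNReal.ofReal (Real.exp (-(2 * m : ℝ) / (4 * (L : ℝ) ^ 2 * M2 ^ 2 * M3 ^ 2))) := by
          rw [← Real.exp_nat_mul, ← Real.exp_add]
          congr 1
          rw [htdef, hcdef]
          have hc2 : ((L : ℝ) * M2 * M3) ^ 2 ≠ 0 := by positivity
          field_simp
          ring
  exact le_trans (measure_mono hsub) (le_trans hchain hfinal)

lemma aux_card0 (m : ℕ) :
    (Finset.univ.filter fun i : Fin (2 * m) => (i : ℕ) < m).card = m := by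
  rcases Nat.eq_zero_or_pos m with hm | hm
  · subst hm; simp
  · have h : (Finset.univ.filter fun i : Fin (2 * m) => (i : ℕ) < m).card
        = (Finset.univ : Finset (Fin m)).card := by
      refine Finset.card_nbij' (fun a => ⟨(a : ℕ) % m, Nat.mod_lt _ hm⟩)
        (fun b => ⟨(b : ℕ), by omega⟩) ?_ ?_ ?_ ?_
      · intro a _; exact Finset.mem_univ _
      · intro b _
        simp only [Finset.mem_coe, Finset.mem_filter, Finset.mem_univ, true_and]
        exact b.isLt
      · intro a ha
        simp only [Finset.mem_coe, Finset.mem_filter, Finset.mem_univ, true_and] at ha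
        simp [Fin.ext_iff, Nat.mod_eq_of_lt ha]
      · intro b _
        simp [Fin.ext_iff, Nat.mod_eq_of_lt b.isLt]
    rw [h, Finset.card_univ, Fintype.card_fin]

lemma aux_card1 (m : ℕ) :
    (Finset.univ.filter fun i : Fin (2 * m) => m ≤ (i : ℕ)).card = m := by
  classical
  have h := Finset.card_filter_add_card_filter_not
    (s := (Finset.univ : Finset (Fin (2 * m)))) (p := fun i : Fin (2 * m) => (i : ℕ) < m)
  simp only [not_lt] at h
  rw [aux_card0] at h
  simp only [Finset.card_univ, Fintype.card_fin] at h
  omega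

/-- **Part (i) of Lemma B.6** (`lem:ineq`) of the paper: each control-variate reference
weight `w_i` is negative with exponentially small probability,
`ℙ(w_i < 0) ≤ exp(−n / (4 L² M₂² M₃²))`, where `n = 2m`, `0 ≤ w* ≤ M₃`,
`|φ_ℓ(x)|² ≤ M₂` and `∫ φ_ℓ dP = 0` for the `L` basis functions, and
`k_L(x,y) = ∑_ℓ φ_ℓ(x) φ_ℓ(y)`. -/
theorem stmt12 {X : Type*} [MeasurableSpace X] (P Q : Measure X)
    [IsProbabilityMeasure P] [IsProbabilityMeasure Q]
    (w : X → ℝ) (hw : Measurable w) (M3 : ℝ)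
    (hwnn : ∀ x, 0 ≤ w x) (hwbd : ∀ x, w x ≤ M3)
    (hPQ : P = Q.withDensity fun x => ENNReal.ofReal (w x))
    (L : ℕ) (φ : Fin L → X → ℝ) (hφm : ∀ ℓ, Measurable (φ ℓ)) (M2 : ℝ)
    (hφbd : ∀ ℓ x, |φ ℓ x| ^ 2 ≤ M2)
    (hφmean : ∀ ℓ, ∫ x, φ ℓ x ∂P = 0)
    (kL : X → X → ℝ) (hkL : ∀ a b, kL a b = ∑ ℓ, φ ℓ a * φ ℓ b)
    (m : ℕ) (D0 D1 : Finset (Fin (2 * m)))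
    (hD0 : D0 = Finset.univ.filter fun i : Fin (2 * m) => (i : ℕ) < m)
    (hD1 : D1 = Finset.univ.filter fun i : Fin (2 * m) => m ≤ (i : ℕ))
    (W : (Fin (2 * m) → X) → Fin (2 * m) → ℝ)
    (hW : ∀ ω i, W ω i =
      if (i : ℕ) < m then
        (1 / (2 * m : ℝ)) * w (ω i)
          - (2 / (2 * m : ℝ) ^ 2) * ∑ j ∈ D1, w (ω i) * w (ω j) * kL (ω j) (ω i)
      else
        (1 / (2 * m : ℝ)) * w (ω i)
          - (2 / (2 * m : ℝ) ^ 2) * ∑ j ∈ D0, w (ω i) * w (ω j) * kL (ω j) (ω i)) :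
    ∀ i : Fin (2 * m),
      (Measure.pi fun _ : Fin (2 * m) => Q) {ω | W ω i < 0}
        ≤ ENNReal.ofReal
            (Real.exp (-(2 * m : ℝ) / (4 * (L : ℝ) ^ 2 * M2 ^ 2 * M3 ^ 2))) := by
  intro i
  have hm : 0 < m := by have := i.isLt; omega
  by_cases hD : 4 * (L : ℝ) ^ 2 * M2 ^ 2 * M3 ^ 2 = 0
  · rw [hD, div_zero, Real.exp_zero, ENNReal.ofReal_one]
    exact prob_le_one
  -- nontrivial constants
  have hne : Nonempty X := by
    by_contra h
    rw [not_nonempty_iff] at h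
    have := measure_univ (μ := Q)
    simp [Set.univ_eq_empty_iff.2 h] at this
  obtain ⟨x₀⟩ := hne
  have hL : 0 < L := by
    rcases Nat.eq_zero_or_pos L with h | h
    · exfalso; apply hD; subst h; simp
    · exact h
  have hM3 : 0 < M3 := by
    rcases lt_or_eq_of_le (le_trans (hwnn x₀) (hwbd x₀)) with h | h
    · exact h
    · exfalso; apply hD; rw [← h]; ring
  have hM2 : 0 < M2 := by
    rcases lt_or_eq_of_le (le_trans (sq_nonneg _) (hφbd ⟨0, hL⟩ x₀)) with h | h
    · exact h
    · exfalso; apply hD; rw [← h]; ring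
  -- mean-zero against Q
  have hmean : ∀ ℓ, ∫ y, w y * φ ℓ y ∂Q = 0 := by
    intro ℓ
    have h1 := hφmean ℓ
    rw [hPQ] at h1
    have h2 : (fun x => ENNReal.ofReal (w x))
        = fun x => ((Real.toNNReal (w x) : ℝ≥0) : ℝ≥0∞) := rfl
    rw [h2, integral_withDensity_eq_integral_smul hw.real_toNNReal] at h1
    rw [← h1]
    apply integral_congr_ae
    filter_upwards with y
    rw [NNReal.smul_def, Real.coe_toNNReal _ (hwnn y), smul_eq_mul]
  by_cases him : (i : ℕ) < m
  · have hset : {ω | W ω i < 0}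
        = {ω : Fin (2 * m) → X | (1 / (2 * m : ℝ)) * w (ω i)
            - (2 / (2 * m : ℝ) ^ 2) * ∑ j ∈ D1, w (ω i) * w (ω j) * kL (ω j) (ω i) < 0} := by
      ext ω
      simp [hW ω i, him]
    have hiD1 : i ∉ D1 := by
      rw [hD1]
      simp only [Finset.mem_filter, Finset.mem_univ, true_and, not_le]
      exact him
    have hcard : D1.card = m := by rw [hD1]; exact aux_card1 m
    rw [hset]
    exact aux_main Q w hw M3 hwnn hwbd L φ hφm M2 hφbd hmean kL hkL m hm i D1 hiD1 hcard
      hL hM2 hM3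
  · have hset : {ω | W ω i < 0}
        = {ω : Fin (2 * m) → X | (1 / (2 * m : ℝ)) * w (ω i)
            - (2 / (2 * m : ℝ) ^ 2) * ∑ j ∈ D0, w (ω i) * w (ω j) * kL (ω j) (ω i) < 0} := by
      ext ω
      simp [hW ω i, him]
    have hiD0 : i ∉ D0 := by
      rw [hD0]
      simp only [Finset.mem_filter, Finset.mem_univ, true_and, not_lt]
      omega
    have hcard : D0.card = m := by rw [hD0]; exact aux_card0 m
    rw [hset]
    exact aux_main Q w hw M3 hwnn hwbd L φ hφm M2 hφbd hmean kL hkL m hm i D0 hiD0 hcard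
      hL hM2 hM3
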